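/- Let α > 0 and consider the 3-stage Runge–Kutta tableau with weights b(α) = (1/(24α²), 1 − 1/(12α²), 1/(24α²)) and coefficient matrix A(α) whose rows are (−3α/4 + 1/(16α) + 1/(48α²), 1/2 − 1/(24α²), −α/4 − 1/(16α) + 1/(48α²)), (1/(16α) + 1/(48α²), 1/2 − 1/(24α²), −1/(16α) + 1/(48α²)), and (α/4 + 1/(16α) + 1/(48α²), 1/2 − 1/(24α²), 3α/4 − 1/(16α) + 1/(48α²)). Then the symplecticity condition b(α)_i · A(α)_{ij} + b(α)_j · A(α)_{ji} − b(α)_i · b(α)_j = 0 holds for all i, j ∈ {1,2,3} if and only if α = √3/6. -/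

import Mathlib

set_option maxHeartbeats 1000000

/-- Coefficient matrix `A(α)` of the 3-stage method AMDMP4_C2. -/
noncomputable def AMDMP4A (α : ℝ) : Fin 3 → Fin 3 → ℝ :=
  ![![-3*α/4 + 1/(16*α) + 1/(48*α^2), 1/2 - 1/(24*α^2), -α/4 - 1/(16*α) + 1/(48*α^2)],
    ![1/(16*α) + 1/(48*α^2),          1/2 - 1/(24*α^2), -1/(16*α) + 1/(48*α^2)],
    ![α/4 + 1/(16*α) + 1/(48*α^2),    1/2 - 1/(24*α^2), 3*α/4 - 1/(16*α) + 1/(48*α^2)]]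

/-- Weights `b(α)` of the 3-stage method AMDMP4_C2. -/
noncomputable def AMDMP4b (α : ℝ) : Fin 3 → ℝ :=
  ![1/(24*α^2), 1 - 1/(12*α^2), 1/(24*α^2)]

theorem stmt0 (α : ℝ) (hα : 0 < α) :
    (∀ i j : Fin 3,
        AMDMP4b α i * AMDMP4A α i j + AMDMP4b α j * AMDMP4A α j i
          - AMDMP4b α i * AMDMP4b α j = 0)
      ↔ α = Real.sqrt 3 / 6 := by
  have hne : α ≠ 0 := hα.ne'
  constructor
  · intro h
    have h00 := h 0 0
    simp [AMDMP4A, AMDMP4b] at h00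
    field_simp at h00
    have hz : α ^ 6 * (α ^ 2 - 1 / 12) = 0 := by linear_combination (-α^5/110592 : ℝ) * h00
    have hsq : α ^ 2 = 1 / 12 := by
      rcases mul_eq_zero.mp hz with h1 | h1
      · exact absurd h1 (pow_ne_zero 6 hne)
      · linarith
    have : α = Real.sqrt (1/12) := by
      rw [← Real.sqrt_sq hα.le, hsq]
    rw [this, show (1/12 : ℝ) = 3 * (1/6)^2 by norm_num,
      Real.sqrt_mul (by norm_num), Real.sqrt_sq (by norm_num)]
    ring
  · intro h
    have hsq : α ^ 2 = 1 / 12 := by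
      rw [h, div_pow, Real.sq_sqrt (by norm_num)]
      norm_num
    have e3 : α ^ 3 = α / 12 := by rw [pow_succ, hsq]; ring
    have e4 : α ^ 4 = 1 / 144 := by rw [show 4 = 2 + 2 from rfl, pow_add, hsq]; norm_num
    have e5 : α ^ 5 = α / 144 := by rw [pow_succ, e4]; ring
    have e6 : α ^ 6 = 1 / 1728 := by rw [show 6 = 4 + 2 from rfl, pow_add, e4, hsq]; norm_num
    have e7 : α ^ 7 = α / 1728 := by rw [pow_succ, e6]; ring
    have e8 : α ^ 8 = 1 / 20736 := by rw [show 8 = 6 + 2 from rfl, pow_add, e6, hsq]; norm_num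
    have e9 : α ^ 9 = α / 20736 := by rw [pow_succ, e8]; ring
    have e10 : α ^ 10 = 1 / 248832 := by rw [show 10 = 8 + 2 from rfl, pow_add, e8, hsq]; norm_num
    have e11 : α ^ 11 = α / 248832 := by rw [pow_succ, e10]; ring
    have e12 : α ^ 12 = 1 / 2985984 := by rw [show 12 = 10 + 2 from rfl, pow_add, e10, hsq]; norm_num
    intro i j
    fin_cases i <;> fin_cases j <;>
      (simp only [AMDMP4A, AMDMP4b, Matrix.cons_val_zero, Matrix.cons_val_one, Matrix.head_cons,
          Matrix.cons_val_two, Matrix.tail_cons, Matrix.head_fin_const, Fin.isValue,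
          Matrix.cons_val_fin_one, Fin.reduceFinMk] <;>
        field_simp <;>
        ring_nf <;>
        linarith [hsq, e3, e4, e5, e6, e7, e8, e9, e10, e11, e12])
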